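/- Let D₀ = D₁ ×_e D₂ where D₁ and D₂ are open domains in ℂ(i₁), and let (F, G) be an i₂e-generating pair on D₀. If w is (F,G)_j-pseudoanalytic on D₀, then w can be decomposed as w(z₁ + z₂i₂) = w_{e1}(z₁ − z₂i₁)e₁ + w_{e2}(z₁ + z₂i₁)e₂ for all z₁ + z₂i₂ ∈ D₀, for some functions w_{e1} : D₁ → ℂ(i₁) and w_{e2} : D₂ → ℂ(i₁). -/

import Mathlib

noncomputable section

open Complex Filter Topology

/-- The bicomplex numbers `𝕋 = {z₁ + z₂ i₂ : z₁, z₂ ∈ ℂ(i₁)}`, represented by the pair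
of `ℂ(i₁)`-components `(z₁, z₂)`. -/
@[ext] structure Bicomplex : Type where
  z1 : ℂ
  z2 : ℂ

namespace Bicomplex

instance : Zero Bicomplex := ⟨⟨0, 0⟩⟩
instance : One Bicomplex := ⟨⟨1, 0⟩⟩
instance : Add Bicomplex := ⟨fun w v => ⟨w.z1 + v.z1, w.z2 + v.z2⟩⟩
instance : Neg Bicomplex := ⟨fun w => ⟨-w.z1, -w.z2⟩⟩
instance : Mul Bicomplex := ⟨fun w v => ⟨w.z1 * v.z1 - w.z2 * v.z2, w.z1 * v.z2 + w.z2 * v.z1⟩⟩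

@[simp] lemma zero_z1 : (0 : Bicomplex).z1 = 0 := rfl
@[simp] lemma zero_z2 : (0 : Bicomplex).z2 = 0 := rfl
@[simp] lemma one_z1 : (1 : Bicomplex).z1 = 1 := rfl
@[simp] lemma one_z2 : (1 : Bicomplex).z2 = 0 := rfl
@[simp] lemma add_z1 (w v : Bicomplex) : (w + v).z1 = w.z1 + v.z1 := rfl
@[simp] lemma add_z2 (w v : Bicomplex) : (w + v).z2 = w.z2 + v.z2 := rfl
@[simp] lemma neg_z1 (w : Bicomplex) : (-w).z1 = -w.z1 := rfl
@[simp] lemma neg_z2 (w : Bicomplex) : (-w).z2 = -w.z2 := rfl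
@[simp] lemma mul_z1 (w v : Bicomplex) : (w * v).z1 = w.z1 * v.z1 - w.z2 * v.z2 := rfl
@[simp] lemma mul_z2 (w v : Bicomplex) : (w * v).z2 = w.z1 * v.z2 + w.z2 * v.z1 := rfl

/-- The bicomplex numbers form a commutative ring. -/
instance : CommRing Bicomplex where
  nsmul n w := ⟨n • w.z1, n • w.z2⟩
  zsmul n w := ⟨n • w.z1, n • w.z2⟩
  nsmul_zero a := by ext <;> exact zero_nsmul _
  nsmul_succ n a := by ext <;> exact succ_nsmul _ _
  zsmul_zero' a := by ext <;> exact zero_zsmul _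
  zsmul_succ' n a := by ext <;> exact SubNegMonoid.zsmul_succ' _ _
  zsmul_neg' n a := by ext <;> exact SubNegMonoid.zsmul_neg' _ _
  add_assoc a b c := by ext <;> simp <;> ring
  zero_add a := by ext <;> simp
  add_zero a := by ext <;> simp
  add_comm a b := by ext <;> simp <;> ring
  neg_add_cancel a := by ext <;> simp
  mul_assoc a b c := by ext <;> simp <;> ring
  one_mul a := by ext <;> simp
  mul_one a := by ext <;> simp
  left_distrib a b c := by ext <;> simp <;> ring
  right_distrib a b c := by ext <;> simp <;> ring
  zero_mul a := by ext <;> simp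
  mul_zero a := by ext <;> simp
  mul_comm a b := by ext <;> simp <;> ring

/-- Inverse: `w⁻¹ = w†₂ / (z₁² + z₂²)` (junk value `0/0` on the null-cone). -/
instance : Inv Bicomplex :=
  ⟨fun w => ⟨w.z1 / (w.z1 ^ 2 + w.z2 ^ 2), -w.z2 / (w.z1 ^ 2 + w.z2 ^ 2)⟩⟩

instance : Div Bicomplex := ⟨fun w v => w * v⁻¹⟩

/-- Embedding of `ℂ(i₁)` into `𝕋`. -/
def ofComplex (c : ℂ) : Bicomplex := ⟨c, 0⟩

/-- Embedding of `ℝ` into `𝕋`. -/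
def ofReal (t : ℝ) : Bicomplex := ⟨(t : ℂ), 0⟩

/-- The imaginary unit `i₁`. -/
def i1 : Bicomplex := ⟨Complex.I, 0⟩

/-- The imaginary unit `i₂`. -/
def i2 : Bicomplex := ⟨0, 1⟩

/-- The hyperbolic unit `j = i₁ i₂`. -/
def jj : Bicomplex := ⟨0, Complex.I⟩

/-- The idempotent `e₁ = (1 + j)/2`. -/
def e1 : Bicomplex := ⟨1 / 2, Complex.I / 2⟩

/-- The idempotent `e₂ = (1 - j)/2`. -/
def e2 : Bicomplex := ⟨1 / 2, -(Complex.I) / 2⟩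

/-- The projection `P₁(z₁ + z₂ i₂) = z₁ - z₂ i₁`. -/
def P1 (w : Bicomplex) : ℂ := w.z1 - w.z2 * Complex.I

/-- The projection `P₂(z₁ + z₂ i₂) = z₁ + z₂ i₁`. -/
def P2 (w : Bicomplex) : ℂ := w.z1 + w.z2 * Complex.I

/-- The conjugation `w†₁ = z̄₁ + z̄₂ i₂`. -/
def dag1 (w : Bicomplex) : Bicomplex := ⟨(starRingEnd ℂ) w.z1, (starRingEnd ℂ) w.z2⟩

/-- The conjugation `w†₂ = z₁ - z₂ i₂`. -/
def dag2 (w : Bicomplex) : Bicomplex := ⟨w.z1, -w.z2⟩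

/-- The conjugation `w†₃ = z̄₁ - z̄₂ i₂`. -/
def dag3 (w : Bicomplex) : Bicomplex := ⟨(starRingEnd ℂ) w.z1, -((starRingEnd ℂ) w.z2)⟩

/-- `𝕋` as `ℂ × ℂ`. -/
def toProd (w : Bicomplex) : ℂ × ℂ := (w.z1, w.z2)

/-- `ℂ × ℂ` as `𝕋`. -/
def ofProd (p : ℂ × ℂ) : Bicomplex := ⟨p.1, p.2⟩

instance : TopologicalSpace Bicomplex := TopologicalSpace.induced toProd inferInstance

/-- The set of points `w` such that `w - w₀` is invertible (i.e. not a zero divisor). -/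
def invertibleDiff (w₀ : Bicomplex) : Set Bicomplex :=
  {w | (w - w₀).z1 ^ 2 + (w - w₀).z2 ^ 2 ≠ 0}

/-- `f` is `𝕋`-differentiable at `w₀` with derivative `d`:
`(f w - f w₀)/(w - w₀) → d` as `w → w₀` with `w - w₀` invertible. -/
def HasTDerivAt (f : Bicomplex → Bicomplex) (d w₀ : Bicomplex) : Prop :=
  Tendsto (fun w => (f w - f w₀) / (w - w₀)) (𝓝[invertibleDiff w₀] w₀) (𝓝 d)

/-- `f` is `𝕋`-holomorphic on `U` if it is `𝕋`-differentiable at each point of `U`. -/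
def THolomorphicOn (f : Bicomplex → Bicomplex) (U : Set Bicomplex) : Prop :=
  ∀ w ∈ U, ∃ d, HasTDerivAt f d w

/-- `f` viewed as a map `ℂ² → ℂ²`. -/
def fProd (f : Bicomplex → Bicomplex) : ℂ × ℂ → ℂ × ℂ := fun p => toProd (f (ofProd p))

/-- `f : 𝕋 → 𝕋` is `n` times continuously (real-)differentiable on `U`. -/
def TContDiffOn (n : ℕ∞) (f : Bicomplex → Bicomplex) (U : Set Bicomplex) : Prop :=
  ContDiffOn ℝ n (fProd f) (toProd '' U)

/-- `g : 𝕋 → ℂ` is `n` times continuously (real-)differentiable on `U`. -/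
def CContDiffOn (n : ℕ∞) (g : Bicomplex → ℂ) (U : Set Bicomplex) : Prop :=
  ContDiffOn ℝ n (fun p => g (ofProd p)) (toProd '' U)

/-- Real partial derivative of `g : 𝕋 → ℂ` at `w` in direction `e`. -/
def pd (e : Bicomplex) (g : Bicomplex → ℂ) (w : Bicomplex) : ℂ :=
  deriv (fun t : ℝ => g (w + ofReal t * e)) 0

/-- Existence of the real partial derivative of `g : 𝕋 → ℂ` at `w` in direction `e`. -/
def pdExists (e : Bicomplex) (g : Bicomplex → ℂ) (w : Bicomplex) : Prop :=
  DifferentiableAt ℝ (fun t : ℝ => g (w + ofReal t * e)) 0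

/-- The scalar (`ℂ(i₁)`-) component `f₁` of `f = f₁ + f₂ i₂`. -/
def s1 (f : Bicomplex → Bicomplex) : Bicomplex → ℂ := fun w => (f w).z1

/-- The vectorial (`ℂ(i₁)`-) component `f₂` of `f = f₁ + f₂ i₂`. -/
def s2 (f : Bicomplex → Bicomplex) : Bicomplex → ℂ := fun w => (f w).z2

/-- Real partial derivative of `f : 𝕋 → 𝕋` in direction `e`. -/
def pdT (e : Bicomplex) (f : Bicomplex → Bicomplex) : Bicomplex → Bicomplex :=
  fun w => ⟨pd e (s1 f) w, pd e (s2 f) w⟩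

/-- Existence of the real partial derivative of `f : 𝕋 → 𝕋` in direction `e`. -/
def pdTExists (e : Bicomplex) (f : Bicomplex → Bicomplex) (w : Bicomplex) : Prop :=
  pdExists e (s1 f) w ∧ pdExists e (s2 f) w

/-- `∂_{z₁} g = ½(∂ₓ g - i₁ ∂_y g)` for `g : 𝕋 → ℂ`. -/
def dz1 (g : Bicomplex → ℂ) : Bicomplex → ℂ :=
  fun w => (pd 1 g w - Complex.I * pd i1 g w) / 2

/-- `∂_{z̄₁} g = ½(∂ₓ g + i₁ ∂_y g)` for `g : 𝕋 → ℂ`. -/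
def dz1bar (g : Bicomplex → ℂ) : Bicomplex → ℂ :=
  fun w => (pd 1 g w + Complex.I * pd i1 g w) / 2

/-- `∂_{z₂} g = ½(∂_p g - i₁ ∂_q g)` for `g : 𝕋 → ℂ`. -/
def dz2 (g : Bicomplex → ℂ) : Bicomplex → ℂ :=
  fun w => (pd i2 g w - Complex.I * pd jj g w) / 2

/-- `∂_{z̄₂} g = ½(∂_p g + i₁ ∂_q g)` for `g : 𝕋 → ℂ`. -/
def dz2bar (g : Bicomplex → ℂ) : Bicomplex → ℂ :=
  fun w => (pd i2 g w + Complex.I * pd jj g w) / 2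

/-- `∂_{z₁}` applied componentwise to `f : 𝕋 → 𝕋`. -/
def dZ1 (f : Bicomplex → Bicomplex) : Bicomplex → Bicomplex :=
  fun w => ⟨dz1 (s1 f) w, dz1 (s2 f) w⟩

/-- `∂_{z₂}` applied componentwise to `f : 𝕋 → 𝕋`. -/
def dZ2 (f : Bicomplex → Bicomplex) : Bicomplex → Bicomplex :=
  fun w => ⟨dz2 (s1 f) w, dz2 (s2 f) w⟩

/-- `∂_{z̄₁}` applied componentwise to `f : 𝕋 → 𝕋`. -/
def dZ1bar (f : Bicomplex → Bicomplex) : Bicomplex → Bicomplex :=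
  fun w => ⟨dz1bar (s1 f) w, dz1bar (s2 f) w⟩

/-- `∂_{z̄₂}` applied componentwise to `f : 𝕋 → 𝕋`. -/
def dZ2bar (f : Bicomplex → Bicomplex) : Bicomplex → Bicomplex :=
  fun w => ⟨dz2bar (s1 f) w, dz2bar (s2 f) w⟩

/-- `∂_ω = ½(∂_{z₁} - i₂ ∂_{z₂})`. -/
def dOm (f : Bicomplex → Bicomplex) : Bicomplex → Bicomplex :=
  fun w => ofComplex (1 / 2) * (dZ1 f w - i2 * dZ2 f w)

/-- `∂_{ω†₂} = ∂_ω̄ = ½(∂_{z₁} + i₂ ∂_{z₂})`. -/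
def dOmBar (f : Bicomplex → Bicomplex) : Bicomplex → Bicomplex :=
  fun w => ofComplex (1 / 2) * (dZ1 f w + i2 * dZ2 f w)

/-- `∂_{ω†₁} = ½(∂_{z̄₁} - i₂ ∂_{z̄₂})`. -/
def dOmDag1 (f : Bicomplex → Bicomplex) : Bicomplex → Bicomplex :=
  fun w => ofComplex (1 / 2) * (dZ1bar f w - i2 * dZ2bar f w)

/-- `∂_{ω†₃} = ½(∂_{z̄₁} + i₂ ∂_{z̄₂})`. -/
def dOmDag3 (f : Bicomplex → Bicomplex) : Bicomplex → Bicomplex :=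
  fun w => ofComplex (1 / 2) * (dZ1bar f w + i2 * dZ2bar f w)

/-- The complexified Laplacian `Δ_ℂ = ∂²_{z₁} + ∂²_{z₂}` acting on `ℂ(i₁)`-valued functions. -/
def lapC (g : Bicomplex → ℂ) : Bicomplex → ℂ :=
  fun w => dz1 (dz1 g) w + dz2 (dz2 g) w

/-- The vector part in the `i₂`-representation `w = ζ₁ + ζ₂ i₁` with `ζ₁, ζ₂ ∈ ℂ(i₂)`:
for `w = x₁ + x₂i₁ + x₃i₂ + x₄j`, `Vec(w) = x₂ + x₄ i₂`, encoded as the complex number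
`x₂ + x₄ i`. -/
def vec2 (w : Bicomplex) : ℂ := ⟨w.z1.im, w.z2.im⟩

/-- Embedding of `ℂ(i₂)` into `𝕋`: the complex number `a + b i` represents `a + b i₂`. -/
def ofC2 (c : ℂ) : Bicomplex := ⟨(c.re : ℂ), (c.im : ℂ)⟩

/-- Multiplication of hyperbolic numbers `ℂ(j) = {x + yj}`, encoded as pairs in `ℝ × ℝ`. -/
def hmul (a b : ℝ × ℝ) : ℝ × ℝ := (a.1 * b.1 + a.2 * b.2, a.1 * b.2 + a.2 * b.1)

/-- Division of hyperbolic numbers (junk value when the denominator is a zero divisor). -/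
def hdiv (a b : ℝ × ℝ) : ℝ × ℝ :=
  hmul a (b.1 / (b.1 ^ 2 - b.2 ^ 2), -b.2 / (b.1 ^ 2 - b.2 ^ 2))

/-- Embedding of the hyperbolic numbers `ℂ(j)` into `𝕋`: `(x, y) ↦ x + y j`. -/
def ofHyp (a : ℝ × ℝ) : Bicomplex := ⟨(a.1 : ℂ), (a.2 : ℂ) * Complex.I⟩

/-- The vector part in the `j`-representation `w = ζ₁ + ζ₂ i₁` with `ζ₁, ζ₂ ∈ ℂ(j)`:
for `w = x₁ + x₂i₁ + x₃i₂ + x₄j`, `Vec(w) = x₂ - x₃ j`, encoded as the pair `(x₂, -x₃)`. -/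
def vec3 (w : Bicomplex) : ℝ × ℝ := (w.z1.im, -w.z2.re)

/-- The `𝕋`-cartesian set `X₁ ×ₑ X₂ = {w : P₁ w ∈ X₁ ∧ P₂ w ∈ X₂}`. -/
def eProd (X₁ X₂ : Set ℂ) : Set Bicomplex := {w | P1 w ∈ X₁ ∧ P2 w ∈ X₂}

/-- `(F, G)` is an `i₁`-generating pair on `D`. -/
def GenPair1 (F G : Bicomplex → Bicomplex) (D : Set Bicomplex) : Prop :=
  TContDiffOn 2 F D ∧ TContDiffOn 2 G D ∧ ∀ w ∈ D, (dag2 (F w) * G w).z2 ≠ 0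

/-- `(F, G)` is an `i₂`-generating pair on `D`. -/
def GenPair2 (F G : Bicomplex → Bicomplex) (D : Set Bicomplex) : Prop :=
  TContDiffOn 2 F D ∧ TContDiffOn 2 G D ∧ ∀ w ∈ D, vec2 (dag1 (F w) * G w) ≠ 0

/-- `(F, G)` is a `j`-generating pair on `D`. -/
def GenPairJ (F G : Bicomplex → Bicomplex) (D : Set Bicomplex) : Prop :=
  TContDiffOn 2 F D ∧ TContDiffOn 2 G D ∧ ∀ w ∈ D, vec3 (dag3 (F w) * G w) ≠ 0

/-- The unique `λ₀ ∈ ℂ(i₁)` with `w(ω₀) = λ₀ F(ω₀) + μ₀ G(ω₀)`. -/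
def lam1 (F G wf : Bicomplex → Bicomplex) (ω₀ : Bicomplex) : ℂ :=
  (dag2 (wf ω₀) * G ω₀).z2 / (dag2 (F ω₀) * G ω₀).z2

/-- The unique `μ₀ ∈ ℂ(i₁)` with `w(ω₀) = λ₀ F(ω₀) + μ₀ G(ω₀)`. -/
def mu1 (F G wf : Bicomplex → Bicomplex) (ω₀ : Bicomplex) : ℂ :=
  -((dag2 (wf ω₀) * F ω₀).z2 / (dag2 (F ω₀) * G ω₀).z2)

/-- `w` has `(F,G)_{i₁}`-derivative `d` at `ω₀`. -/
def HasFGDeriv1 (F G wf : Bicomplex → Bicomplex) (d ω₀ : Bicomplex) : Prop :=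
  Tendsto
    (fun ω => (wf ω - ofComplex (lam1 F G wf ω₀) * F ω - ofComplex (mu1 F G wf ω₀) * G ω)
        / (ω - ω₀))
    (𝓝[invertibleDiff ω₀] ω₀) (𝓝 d)

/-- The unique `λ₀ ∈ ℂ(j)` with `w(ω₀) = λ₀ F(ω₀) + μ₀ G(ω₀)`. -/
def lamJ (F G wf : Bicomplex → Bicomplex) (ω₀ : Bicomplex) : ℝ × ℝ :=
  hdiv (vec3 (dag3 (wf ω₀) * G ω₀)) (vec3 (dag3 (F ω₀) * G ω₀))

/-- The unique `μ₀ ∈ ℂ(j)` with `w(ω₀) = λ₀ F(ω₀) + μ₀ G(ω₀)`. -/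
def muJ (F G wf : Bicomplex → Bicomplex) (ω₀ : Bicomplex) : ℝ × ℝ :=
  -(hdiv (vec3 (dag3 (wf ω₀) * F ω₀)) (vec3 (dag3 (F ω₀) * G ω₀)))

/-- `w` has `(F,G)_j`-derivative `d` at `ω₀`. -/
def HasFGDerivJ (F G wf : Bicomplex → Bicomplex) (d ω₀ : Bicomplex) : Prop :=
  Tendsto
    (fun ω => (wf ω - ofHyp (lamJ F G wf ω₀) * F ω - ofHyp (muJ F G wf ω₀) * G ω) / (ω - ω₀))
    (𝓝[invertibleDiff ω₀] ω₀) (𝓝 d)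

/-- `w` is `(F,G)_j`-pseudoanalytic on `D`. -/
def PseudoanalyticJ (F G wf : Bicomplex → Bicomplex) (D : Set Bicomplex) : Prop :=
  ∀ ω ∈ D, ∃ d, HasFGDerivJ F G wf d ω

/-- `w` has continuous partial derivatives in a neighborhood of `ω₀`. -/
def HasContPartialsNear (f : Bicomplex → Bicomplex) (w₀ : Bicomplex) : Prop :=
  ∃ V ∈ 𝓝 w₀, ∀ e ∈ ({1, i1, i2, jj} : Set Bicomplex),
    (∀ w ∈ V, pdTExists e f w) ∧ ContinuousOn (pdT e f) V

/-! Characteristic coefficients with respect to the `†₂` conjugation (`i₁` case). -/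

def denom2 (F G : Bicomplex → Bicomplex) (w : Bicomplex) : Bicomplex :=
  F w * dag2 (G w) - dag2 (F w) * G w

def aCoef2₁ (F G : Bicomplex → Bicomplex) (w : Bicomplex) : Bicomplex :=
  -((dag1 (F w) * dOmDag1 G w - dOmDag1 F w * dag1 (G w)) / denom2 F G w)

def bCoef2₁ (F G : Bicomplex → Bicomplex) (w : Bicomplex) : Bicomplex :=
  (F w * dOmDag1 G w - dOmDag1 F w * G w) / denom2 F G w

def aCoef2₂ (F G : Bicomplex → Bicomplex) (w : Bicomplex) : Bicomplex :=
  -((dag2 (F w) * dOmBar G w - dOmBar F w * dag2 (G w)) / denom2 F G w)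

def bCoef2₂ (F G : Bicomplex → Bicomplex) (w : Bicomplex) : Bicomplex :=
  (F w * dOmBar G w - dOmBar F w * G w) / denom2 F G w

def aCoef2₃ (F G : Bicomplex → Bicomplex) (w : Bicomplex) : Bicomplex :=
  -((dag3 (F w) * dOmDag3 G w - dOmDag3 F w * dag3 (G w)) / denom2 F G w)

def bCoef2₃ (F G : Bicomplex → Bicomplex) (w : Bicomplex) : Bicomplex :=
  (F w * dOmDag3 G w - dOmDag3 F w * G w) / denom2 F G w

def Acoef2 (F G : Bicomplex → Bicomplex) (w : Bicomplex) : Bicomplex :=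
  -((dag2 (F w) * dOm G w - dOm F w * dag2 (G w)) / denom2 F G w)

def Bcoef2 (F G : Bicomplex → Bicomplex) (w : Bicomplex) : Bicomplex :=
  (F w * dOm G w - dOm F w * G w) / denom2 F G w

/-! Characteristic coefficients with respect to the `†₃` conjugation (`j` case). -/

def denom3 (F G : Bicomplex → Bicomplex) (w : Bicomplex) : Bicomplex :=
  F w * dag3 (G w) - dag3 (F w) * G w

def aCoef3₁ (F G : Bicomplex → Bicomplex) (w : Bicomplex) : Bicomplex :=
  -((dag1 (F w) * dOmDag1 G w - dOmDag1 F w * dag1 (G w)) / denom3 F G w)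

def bCoef3₁ (F G : Bicomplex → Bicomplex) (w : Bicomplex) : Bicomplex :=
  (F w * dOmDag1 G w - dOmDag1 F w * G w) / denom3 F G w

def aCoef3₂ (F G : Bicomplex → Bicomplex) (w : Bicomplex) : Bicomplex :=
  -((dag2 (F w) * dOmBar G w - dOmBar F w * dag2 (G w)) / denom3 F G w)

def bCoef3₂ (F G : Bicomplex → Bicomplex) (w : Bicomplex) : Bicomplex :=
  (F w * dOmBar G w - dOmBar F w * G w) / denom3 F G w

def aCoef3₃ (F G : Bicomplex → Bicomplex) (w : Bicomplex) : Bicomplex :=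
  -((dag3 (F w) * dOmDag3 G w - dOmDag3 F w * dag3 (G w)) / denom3 F G w)

def bCoef3₃ (F G : Bicomplex → Bicomplex) (w : Bicomplex) : Bicomplex :=
  (F w * dOmDag3 G w - dOmDag3 F w * G w) / denom3 F G w

def Acoef3 (F G : Bicomplex → Bicomplex) (w : Bicomplex) : Bicomplex :=
  -((dag3 (F w) * dOm G w - dOm F w * dag3 (G w)) / denom3 F G w)

def Bcoef3 (F G : Bicomplex → Bicomplex) (w : Bicomplex) : Bicomplex :=
  (F w * dOm G w - dOm F w * G w) / denom3 F G w

/-! Classical (Bers) pseudoanalytic function theory in `ℂ(i₁)`. -/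

/-- A complex (in `i₁`) generating pair on `D ⊆ ℂ(i₁)`. -/
def ComplexGenPair (Fe Ge : ℂ → ℂ) (D : Set ℂ) : Prop :=
  ContDiffOn ℝ 2 Fe D ∧ ContDiffOn ℝ 2 Ge D ∧
    ∀ z ∈ D, ((starRingEnd ℂ) (Fe z) * Ge z).im ≠ 0

/-- The unique real `λ₀` with `w(z₀) = λ₀ F(z₀) + μ₀ G(z₀)`. -/
def lamBers (Fe Ge we : ℂ → ℂ) (z₀ : ℂ) : ℝ :=
  ((starRingEnd ℂ) (we z₀) * Ge z₀).im / ((starRingEnd ℂ) (Fe z₀) * Ge z₀).im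

/-- The unique real `μ₀` with `w(z₀) = λ₀ F(z₀) + μ₀ G(z₀)`. -/
def muBers (Fe Ge we : ℂ → ℂ) (z₀ : ℂ) : ℝ :=
  -(((starRingEnd ℂ) (we z₀) * Fe z₀).im / ((starRingEnd ℂ) (Fe z₀) * Ge z₀).im)

/-- `w_e` has Bers `(F_e,G_e)`-derivative `d` at `z₀`. -/
def HasBersDerivAt (Fe Ge we : ℂ → ℂ) (d z₀ : ℂ) : Prop :=
  Tendsto
    (fun z => (we z - (lamBers Fe Ge we z₀ : ℂ) * Fe z - (muBers Fe Ge we z₀ : ℂ) * Ge z)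
        / (z - z₀))
    (𝓝[≠] z₀) (𝓝 d)

/-- `w_e` is `(F_e,G_e)`-pseudoanalytic (in the sense of Bers) on `D`. -/
def BersPseudoanalyticOn (Fe Ge we : ℂ → ℂ) (D : Set ℂ) : Prop :=
  ∀ z ∈ D, ∃ d, HasBersDerivAt Fe Ge we d z

/-- `∂_z̄ = ½(∂ₓ + i ∂_y)` for functions `ℂ(i₁) → ℂ(i₁)`. -/
def dzbarC (g : ℂ → ℂ) (z : ℂ) : ℂ :=
  (deriv (fun t : ℝ => g (z + t)) 0 + Complex.I * deriv (fun t : ℝ => g (z + t * Complex.I)) 0) / 2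

/-- The Bers characteristic coefficient `a_{(F_e,G_e)}`. -/
def aBers (Fe Ge : ℂ → ℂ) (z : ℂ) : ℂ :=
  -(((starRingEnd ℂ) (Fe z) * dzbarC Ge z - dzbarC Fe z * (starRingEnd ℂ) (Ge z)) /
    (Fe z * (starRingEnd ℂ) (Ge z) - (starRingEnd ℂ) (Fe z) * Ge z))

/-- The Bers characteristic coefficient `b_{(F_e,G_e)}`. -/
def bBers (Fe Ge : ℂ → ℂ) (z : ℂ) : ℂ :=
  (Fe z * dzbarC Ge z - dzbarC Fe z * Ge z) /
    (Fe z * (starRingEnd ℂ) (Ge z) - (starRingEnd ℂ) (Fe z) * Ge z)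

/-- `(F, G)` is the `i₂e`-generating pair associated to complex generating pairs
`(F_{e1}, G_{e1})` on `D₁` and `(F_{e2}, G_{e2})` on `D₂`. -/
def I2eGenPair (Fe1 Ge1 Fe2 Ge2 : ℂ → ℂ) (D₁ D₂ : Set ℂ)
    (F G : Bicomplex → Bicomplex) : Prop :=
  ComplexGenPair Fe1 Ge1 D₁ ∧ ComplexGenPair Fe2 Ge2 D₂ ∧
  (∀ w, F w = ofComplex (Fe1 (P1 w)) * e1 + ofComplex (Fe2 (P2 w)) * e2) ∧
  (∀ w, G w = ofComplex (Ge1 (P1 w)) * e1 + ofComplex (Ge2 (P2 w)) * e2)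


/-! ### Auxiliary lemmas -/

lemma continuous_toProd : Continuous toProd := continuous_induced_dom

lemma continuous_z1 : Continuous fun w : Bicomplex => w.z1 :=
  continuous_fst.comp continuous_toProd

lemma continuous_z2 : Continuous fun w : Bicomplex => w.z2 :=
  continuous_snd.comp continuous_toProd

lemma continuous_P1 : Continuous P1 :=
  continuous_z1.sub (continuous_z2.mul continuous_const)

lemma continuous_P2 : Continuous P2 :=
  continuous_z1.add (continuous_z2.mul continuous_const)

/-- The idempotent parametrization: `idem α β = α e₁ + β e₂`. -/
def idem (α β : ℂ) : Bicomplex := ⟨(α + β) / 2, (α - β) * Complex.I / 2⟩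

@[simp] lemma P1_idem (α β : ℂ) : P1 (idem α β) = α := by
  simp only [P1, idem]
  have : (α - β) * Complex.I / 2 * Complex.I = (β - α)/2 := by
    rw [div_mul_eq_mul_div, mul_assoc, Complex.I_mul_I]; ring
  rw [this]; ring

@[simp] lemma P2_idem (α β : ℂ) : P2 (idem α β) = β := by
  simp only [P2, idem]
  have : (α - β) * Complex.I / 2 * Complex.I = (β - α)/2 := by
    rw [div_mul_eq_mul_div, mul_assoc, Complex.I_mul_I]; ring
  rw [this]; ring

lemma idem_P (u : Bicomplex) : idem (P1 u) (P2 u) = u := by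
  ext
  · show ((u.z1 - u.z2*Complex.I) + (u.z1 + u.z2*Complex.I))/2 = u.z1; ring
  · show ((u.z1 - u.z2*Complex.I) - (u.z1 + u.z2*Complex.I)) * Complex.I / 2 = u.z2
    rw [show (u.z1 - u.z2*Complex.I) - (u.z1 + u.z2*Complex.I) = -2*u.z2*Complex.I by ring]
    rw [show -2*u.z2*Complex.I*Complex.I = -2*u.z2*(Complex.I*Complex.I) by ring, Complex.I_mul_I]
    ring

lemma ext_P {u v : Bicomplex} (h1 : P1 u = P1 v) (h2 : P2 u = P2 v) : u = v := by
  rw [← idem_P u, ← idem_P v, h1, h2]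

lemma continuous_idemR (a : ℂ) : Continuous fun y => idem a y := by
  rw [continuous_induced_rng]
  exact ((continuous_const.add continuous_id).div_const 2).prodMk
    (((continuous_const.sub continuous_id).mul continuous_const).div_const 2)

lemma continuous_idemL (b : ℂ) : Continuous fun x => idem x b := by
  rw [continuous_induced_rng]
  exact ((continuous_id.add continuous_const).div_const 2).prodMk
    (((continuous_id.sub continuous_const).mul continuous_const).div_const 2)

@[simp] lemma sub_z1 (u v : Bicomplex) : (u - v).z1 = u.z1 - v.z1 := by
  rw [sub_eq_add_neg, sub_eq_add_neg]; simp

@[simp] lemma sub_z2 (u v : Bicomplex) : (u - v).z2 = u.z2 - v.z2 := by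
  rw [sub_eq_add_neg, sub_eq_add_neg]; simp

@[simp] lemma P1_add (u v : Bicomplex) : P1 (u + v) = P1 u + P1 v := by
  simp [P1]; ring

@[simp] lemma P2_add (u v : Bicomplex) : P2 (u + v) = P2 u + P2 v := by
  simp [P2]; ring

@[simp] lemma P1_sub (u v : Bicomplex) : P1 (u - v) = P1 u - P1 v := by
  simp [P1]; ring

@[simp] lemma P2_sub (u v : Bicomplex) : P2 (u - v) = P2 u - P2 v := by
  simp [P2]; ring

@[simp] lemma P1_mul (u v : Bicomplex) : P1 (u * v) = P1 u * P1 v := by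
  simp only [P1, mul_z1, mul_z2]
  rw [show (u.z1 - u.z2*Complex.I) * (v.z1 - v.z2*Complex.I)
    = u.z1*v.z1 + u.z2*v.z2*(Complex.I*Complex.I) - (u.z1*v.z2 + u.z2*v.z1)*Complex.I by ring,
    Complex.I_mul_I]
  ring

@[simp] lemma P2_mul (u v : Bicomplex) : P2 (u * v) = P2 u * P2 v := by
  simp only [P2, mul_z1, mul_z2]
  rw [show (u.z1 + u.z2*Complex.I) * (v.z1 + v.z2*Complex.I)
    = u.z1*v.z1 + u.z2*v.z2*(Complex.I*Complex.I) + (u.z1*v.z2 + u.z2*v.z1)*Complex.I by ring,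
    Complex.I_mul_I]
  ring

@[simp] lemma P1_ofComplex (c : ℂ) : P1 (ofComplex c) = c := by simp [P1, ofComplex]

@[simp] lemma P2_ofComplex (c : ℂ) : P2 (ofComplex c) = c := by simp [P2, ofComplex]

@[simp] lemma P1_e1 : P1 e1 = 1 := by
  simp only [P1, e1]
  rw [show Complex.I/2*Complex.I = (Complex.I*Complex.I)/2 by ring, Complex.I_mul_I]; norm_num

@[simp] lemma P2_e1 : P2 e1 = 0 := by
  simp only [P2, e1]
  rw [show Complex.I/2*Complex.I = (Complex.I*Complex.I)/2 by ring, Complex.I_mul_I]; norm_num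

@[simp] lemma P1_e2 : P1 e2 = 0 := by
  simp only [P1, e2]
  rw [show -Complex.I/2*Complex.I = -((Complex.I*Complex.I)/2) by ring, Complex.I_mul_I]; norm_num

@[simp] lemma P2_e2 : P2 e2 = 1 := by
  simp only [P2, e2]
  rw [show -Complex.I/2*Complex.I = -((Complex.I*Complex.I)/2) by ring, Complex.I_mul_I]; norm_num

lemma eq_ofComplex_P (u : Bicomplex) :
    u = ofComplex (P1 u) * e1 + ofComplex (P2 u) * e2 := by
  apply ext_P <;> simp

lemma sq_add_sq_eq (v : Bicomplex) : v.z1 ^ 2 + v.z2 ^ 2 = P1 v * P2 v := by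
  simp only [P1, P2]
  rw [show (v.z1 - v.z2*Complex.I) * (v.z1 + v.z2*Complex.I)
    = v.z1^2 - v.z2^2*(Complex.I*Complex.I) by ring, Complex.I_mul_I]
  ring

lemma mem_invDiff {ω₀ ω : Bicomplex} :
    ω ∈ invertibleDiff ω₀ ↔ P1 ω ≠ P1 ω₀ ∧ P2 ω ≠ P2 ω₀ := by
  rw [invertibleDiff, Set.mem_setOf_eq, sq_add_sq_eq, mul_ne_zero_iff,
    P1_sub, P2_sub, sub_ne_zero, sub_ne_zero]

lemma inv_z1 (v : Bicomplex) : (v⁻¹).z1 = v.z1 / (v.z1 ^ 2 + v.z2 ^ 2) := rfl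
lemma inv_z2 (v : Bicomplex) : (v⁻¹).z2 = -v.z2 / (v.z1 ^ 2 + v.z2 ^ 2) := rfl

lemma P1_inv (v : Bicomplex) (h : v.z1 ^ 2 + v.z2 ^ 2 ≠ 0) : P1 v⁻¹ = (P1 v)⁻¹ := by
  have h' := h
  rw [sq_add_sq_eq] at h'
  obtain ⟨h1, h2⟩ := mul_ne_zero_iff.mp h'
  have : P1 v⁻¹ = (v.z1 + v.z2 * Complex.I) / (v.z1 ^ 2 + v.z2 ^ 2) := by
    simp only [P1, inv_z1, inv_z2]; ring
  rw [this, sq_add_sq_eq]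
  rw [show v.z1 + v.z2 * Complex.I = P2 v from rfl]
  rw [eq_comm, inv_eq_iff_eq_inv, eq_comm, inv_div]
  exact mul_div_cancel_right₀ _ h2

lemma P2_inv (v : Bicomplex) (h : v.z1 ^ 2 + v.z2 ^ 2 ≠ 0) : P2 v⁻¹ = (P2 v)⁻¹ := by
  have h' := h
  rw [sq_add_sq_eq] at h'
  obtain ⟨h1, h2⟩ := mul_ne_zero_iff.mp h'
  have : P2 v⁻¹ = (v.z1 - v.z2 * Complex.I) / (v.z1 ^ 2 + v.z2 ^ 2) := by
    simp only [P2, inv_z1, inv_z2]; ring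
  rw [this, sq_add_sq_eq]
  rw [show v.z1 - v.z2 * Complex.I = P1 v from rfl]
  rw [eq_comm, inv_eq_iff_eq_inv, eq_comm, inv_div]
  exact mul_div_cancel_left₀ _ h1

lemma div_def (u v : Bicomplex) : u / v = u * v⁻¹ := rfl

lemma P1_div (u v : Bicomplex) (h : v.z1 ^ 2 + v.z2 ^ 2 ≠ 0) :
    P1 (u / v) = P1 u / P1 v := by
  rw [div_def, P1_mul, P1_inv v h, div_eq_mul_inv]

lemma P2_div (u v : Bicomplex) (h : v.z1 ^ 2 + v.z2 ^ 2 ≠ 0) :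
    P2 (u / v) = P2 u / P2 v := by
  rw [div_def, P2_mul, P2_inv v h, div_eq_mul_inv]


lemma P1_dag3 (u : Bicomplex) : P1 (dag3 u) = (starRingEnd ℂ) (P1 u) := by
  simp only [P1, dag3, map_sub, map_mul, Complex.conj_I]
  ring

lemma P2_dag3 (u : Bicomplex) : P2 (dag3 u) = (starRingEnd ℂ) (P2 u) := by
  simp only [P2, dag3, map_add, map_mul, Complex.conj_I]
  ring

lemma P1_ofHyp (p : ℝ × ℝ) : P1 (ofHyp p) = ((p.1 + p.2 : ℝ) : ℂ) := by
  simp only [P1, ofHyp]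
  rw [show (p.2 : ℂ) * Complex.I * Complex.I = (p.2 : ℂ) * (Complex.I * Complex.I) by ring,
    Complex.I_mul_I]
  push_cast; ring

lemma P2_ofHyp (p : ℝ × ℝ) : P2 (ofHyp p) = ((p.1 - p.2 : ℝ) : ℂ) := by
  simp only [P2, ofHyp]
  rw [show (p.2 : ℂ) * Complex.I * Complex.I = (p.2 : ℂ) * (Complex.I * Complex.I) by ring,
    Complex.I_mul_I]
  push_cast; ring

lemma vec3_sum (u : Bicomplex) : (vec3 u).1 + (vec3 u).2 = (P1 u).im := by
  simp [vec3, P1, Complex.sub_im, Complex.mul_im]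
  ring

lemma vec3_diff (u : Bicomplex) : (vec3 u).1 - (vec3 u).2 = (P2 u).im := by
  simp [vec3, P2, Complex.add_im, Complex.mul_im]

lemma hdiv_sum (A Δ : ℝ × ℝ) (h1 : Δ.1 + Δ.2 ≠ 0) (h2 : Δ.1 - Δ.2 ≠ 0) :
    (hdiv A Δ).1 + (hdiv A Δ).2 = (A.1 + A.2) / (Δ.1 + Δ.2) := by
  have hr : Δ.1 ^ 2 - Δ.2 ^ 2 ≠ 0 := by
    rw [show Δ.1 ^ 2 - Δ.2 ^ 2 = (Δ.1 + Δ.2) * (Δ.1 - Δ.2) by ring]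
    exact mul_ne_zero h1 h2
  simp only [hdiv, hmul]
  field_simp
  ring

lemma hdiv_diff (A Δ : ℝ × ℝ) (h1 : Δ.1 + Δ.2 ≠ 0) (h2 : Δ.1 - Δ.2 ≠ 0) :
    (hdiv A Δ).1 - (hdiv A Δ).2 = (A.1 - A.2) / (Δ.1 - Δ.2) := by
  have hr : Δ.1 ^ 2 - Δ.2 ^ 2 ≠ 0 := by
    rw [show Δ.1 ^ 2 - Δ.2 ^ 2 = (Δ.1 + Δ.2) * (Δ.1 - Δ.2) by ring]
    exact mul_ne_zero h1 h2
  simp only [hdiv, hmul]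
  field_simp
  ring

/-- Classical real Cramer decomposition in `ℂ`. -/
lemma cramer (u f g : ℂ) (h : ((starRingEnd ℂ) f * g).im ≠ 0) :
    ((((starRingEnd ℂ) u * g).im / ((starRingEnd ℂ) f * g).im : ℝ) : ℂ) * f +
      (-((((starRingEnd ℂ) u * f).im / ((starRingEnd ℂ) f * g).im : ℝ)) : ℂ) * g = u := by
  have h' : f.re * g.im - f.im * g.re ≠ 0 := by
    intro hc; apply h; simp [Complex.mul_im]; linarith
  have h2 : g.im * f.re - g.re * f.im ≠ 0 := fun hc => h' (by linarith)
  apply Complex.ext <;>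
  · simp only [Complex.add_re, Complex.add_im, Complex.mul_re, Complex.mul_im,
      Complex.neg_re, Complex.neg_im, Complex.ofReal_re, Complex.ofReal_im,
      Complex.mul_im, Complex.conj_re, Complex.conj_im, Complex.mul_re]
    field_simp [h2]
    field_simp [show g.im * f.re + -(g.re * f.im) ≠ 0 from fun hc => h2 (by linarith)]
    ring

/-- Cramer representation for the `(F,G)_j` coefficients. -/
lemma rep (F G wf : Bicomplex → Bicomplex) (ω₀ : Bicomplex)
    (hΔ1 : ((starRingEnd ℂ) (P1 (F ω₀)) * P1 (G ω₀)).im ≠ 0)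
    (hΔ2 : ((starRingEnd ℂ) (P2 (F ω₀)) * P2 (G ω₀)).im ≠ 0) :
    wf ω₀ = ofHyp (lamJ F G wf ω₀) * F ω₀ + ofHyp (muJ F G wf ω₀) * G ω₀ := by
  have hs : (vec3 (dag3 (F ω₀) * G ω₀)).1 + (vec3 (dag3 (F ω₀) * G ω₀)).2
      = ((starRingEnd ℂ) (P1 (F ω₀)) * P1 (G ω₀)).im := by
    rw [vec3_sum, P1_mul, P1_dag3]
  have hd : (vec3 (dag3 (F ω₀) * G ω₀)).1 - (vec3 (dag3 (F ω₀) * G ω₀)).2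
      = ((starRingEnd ℂ) (P2 (F ω₀)) * P2 (G ω₀)).im := by
    rw [vec3_diff, P2_mul, P2_dag3]
  have h1 : (vec3 (dag3 (F ω₀) * G ω₀)).1 + (vec3 (dag3 (F ω₀) * G ω₀)).2 ≠ 0 := by
    rw [hs]; exact hΔ1
  have h2 : (vec3 (dag3 (F ω₀) * G ω₀)).1 - (vec3 (dag3 (F ω₀) * G ω₀)).2 ≠ 0 := by
    rw [hd]; exact hΔ2
  apply ext_P
  · rw [P1_add, P1_mul, P1_mul, P1_ofHyp, P1_ofHyp]
    unfold lamJ muJ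
    rw [Prod.fst_neg, Prod.snd_neg, show -(hdiv (vec3 (dag3 (wf ω₀) * F ω₀)) (vec3 (dag3 (F ω₀) * G ω₀))).1
        + -(hdiv (vec3 (dag3 (wf ω₀) * F ω₀)) (vec3 (dag3 (F ω₀) * G ω₀))).2
      = -((hdiv (vec3 (dag3 (wf ω₀) * F ω₀)) (vec3 (dag3 (F ω₀) * G ω₀))).1
        + (hdiv (vec3 (dag3 (wf ω₀) * F ω₀)) (vec3 (dag3 (F ω₀) * G ω₀))).2) by ring]
    rw [hdiv_sum _ _ h1 h2, hdiv_sum _ _ h1 h2]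
    rw [show (vec3 (dag3 (wf ω₀) * G ω₀)).1 + (vec3 (dag3 (wf ω₀) * G ω₀)).2
      = ((starRingEnd ℂ) (P1 (wf ω₀)) * P1 (G ω₀)).im by rw [vec3_sum, P1_mul, P1_dag3]]
    rw [show (vec3 (dag3 (wf ω₀) * F ω₀)).1 + (vec3 (dag3 (wf ω₀) * F ω₀)).2
      = ((starRingEnd ℂ) (P1 (wf ω₀)) * P1 (F ω₀)).im by rw [vec3_sum, P1_mul, P1_dag3]]
    rw [hs, Complex.ofReal_neg]
    exact (cramer (P1 (wf ω₀)) (P1 (F ω₀)) (P1 (G ω₀)) hΔ1).symm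
  · rw [P2_add, P2_mul, P2_mul, P2_ofHyp, P2_ofHyp]
    unfold lamJ muJ
    rw [Prod.fst_neg, Prod.snd_neg, show -(hdiv (vec3 (dag3 (wf ω₀) * F ω₀)) (vec3 (dag3 (F ω₀) * G ω₀))).1
        - -(hdiv (vec3 (dag3 (wf ω₀) * F ω₀)) (vec3 (dag3 (F ω₀) * G ω₀))).2
      = -((hdiv (vec3 (dag3 (wf ω₀) * F ω₀)) (vec3 (dag3 (F ω₀) * G ω₀))).1
        - (hdiv (vec3 (dag3 (wf ω₀) * F ω₀)) (vec3 (dag3 (F ω₀) * G ω₀))).2) by ring]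
    rw [hdiv_diff _ _ h1 h2, hdiv_diff _ _ h1 h2]
    rw [show (vec3 (dag3 (wf ω₀) * G ω₀)).1 - (vec3 (dag3 (wf ω₀) * G ω₀)).2
      = ((starRingEnd ℂ) (P2 (wf ω₀)) * P2 (G ω₀)).im by rw [vec3_diff, P2_mul, P2_dag3]]
    rw [show (vec3 (dag3 (wf ω₀) * F ω₀)).1 - (vec3 (dag3 (wf ω₀) * F ω₀)).2
      = ((starRingEnd ℂ) (P2 (wf ω₀)) * P2 (F ω₀)).im by rw [vec3_diff, P2_mul, P2_dag3]]
    rw [hd, Complex.ofReal_neg]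
    exact (cramer (P2 (wf ω₀)) (P2 (F ω₀)) (P2 (G ω₀)) hΔ2).symm

lemma neBot_invDiff (ω₁ : Bicomplex) : (𝓝[invertibleDiff ω₁] ω₁).NeBot := by
  rw [← mem_closure_iff_nhdsWithin_neBot]
  have hcont : Continuous (fun t : ℝ => ω₁ + ofReal t) := by
    rw [continuous_induced_rng]
    have : (toProd ∘ fun t : ℝ => ω₁ + ofReal t) = fun t : ℝ => (ω₁.z1 + (t : ℂ), ω₁.z2) := by
      funext t; simp [toProd, ofReal]
    rw [this]
    exact (continuous_const.add Complex.continuous_ofReal).prodMk continuous_const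
  have htend : Tendsto (fun n : ℕ => ω₁ + ofReal (1 / (n + 1))) atTop (𝓝 ω₁) := by
    have h0 : ω₁ + ofReal 0 = ω₁ := by ext <;> simp [ofReal]
    have := (hcont.tendsto 0).comp tendsto_one_div_add_atTop_nhds_zero_nat
    rw [h0] at this
    exact this
  refine mem_closure_of_tendsto htend (Filter.Eventually.of_forall fun n => ?_)
  have hpos : (0 : ℝ) < 1 / (n + 1) := by positivity
  show ((ω₁ + ofReal (1 / (n + 1)) - ω₁).z1) ^ 2 + ((ω₁ + ofReal (1 / (n + 1)) - ω₁).z2) ^ 2 ≠ 0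
  rw [show (ω₁ + ofReal (1 / (n + 1)) - ω₁).z1 = ((1 / (n + 1) : ℝ) : ℂ) by simp [ofReal],
      show (ω₁ + ofReal (1 / (n + 1)) - ω₁).z2 = 0 by simp [ofReal]]
  have hne : ((1 / (n + 1) : ℝ) : ℂ) ≠ 0 := by exact_mod_cast ne_of_gt hpos
  simpa using pow_ne_zero 2 hne

/-- Core analytic lemma: local constancy of `W` in the `σ`-direction. -/
lemma core (π σ Φ Γ W : Bicomplex → ℂ) (E : Set Bicomplex)
    (hπ : Continuous π) (hσ : Continuous σ)
    (hiff : ∀ ω₀ ω : Bicomplex, ω ∈ invertibleDiff ω₀ ↔ (π ω ≠ π ω₀ ∧ σ ω ≠ σ ω₀))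
    (hinj : ∀ u v : Bicomplex, π u = π v → σ u = σ v → u = v)
    (hΦπ : ∀ u v : Bicomplex, π u = π v → Φ u = Φ v)
    (hΓπ : ∀ u v : Bicomplex, π u = π v → Γ u = Γ v)
    (hΦc : ∀ ω ∈ E, ContinuousAt Φ ω) (hΓc : ∀ ω ∈ E, ContinuousAt Γ ω)
    (hE : ∀ ω₀ ∈ E, ∃ lam mu : ℝ, ∃ d1 : ℂ,
      W ω₀ = lam * Φ ω₀ + mu * Γ ω₀ ∧
      Tendsto (fun ω => (W ω - lam * Φ ω - mu * Γ ω) / (π ω - π ω₀))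
        (𝓝[invertibleDiff ω₀] ω₀) (𝓝 d1))
    (ω₀ : Bicomplex) (hω₀ : ω₀ ∈ E) :
    ∀ᶠ ω₁ in 𝓝 ω₀, ω₁ ∈ E → π ω₁ = π ω₀ → W ω₁ = W ω₀ := by
  obtain ⟨lam, mu, d1, hrep, hten⟩ := hE ω₀ hω₀
  have h1 : ∀ᶠ ω in 𝓝[invertibleDiff ω₀] ω₀,
      dist ((W ω - lam * Φ ω - mu * Γ ω) / (π ω - π ω₀)) d1 < 1 :=
    hten (Metric.ball_mem_nhds d1 one_pos)
  rw [eventually_nhdsWithin_iff, eventually_nhds_iff] at h1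
  obtain ⟨U, hUprop, hUopen, hω₀U⟩ := h1
  filter_upwards [hUopen.mem_nhds hω₀U] with ω₁ hω₁U hω₁E hπeq
  by_cases hσe : σ ω₁ = σ ω₀
  · rw [hinj ω₁ ω₀ hπeq hσe]
  obtain ⟨lam', mu', d1', hrep', hten'⟩ := hE ω₁ hω₁E
  haveI : (𝓝[invertibleDiff ω₁] ω₁).NeBot := neBot_invDiff ω₁
  have hmemS : ∀ᶠ ω in 𝓝[invertibleDiff ω₁] ω₁, ω ∈ invertibleDiff ω₁ :=
    eventually_mem_nhdsWithin
  have hπ1 : Tendsto π (𝓝[invertibleDiff ω₁] ω₁) (𝓝 (π ω₁)) :=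
    (hπ.tendsto ω₁).mono_left nhdsWithin_le_nhds
  have hσ1 : Tendsto σ (𝓝[invertibleDiff ω₁] ω₁) (𝓝 (σ ω₁)) :=
    (hσ.tendsto ω₁).mono_left nhdsWithin_le_nhds
  have hΦ1 : Tendsto Φ (𝓝[invertibleDiff ω₁] ω₁) (𝓝 (Φ ω₁)) :=
    ((hΦc ω₁ hω₁E).tendsto).mono_left nhdsWithin_le_nhds
  have hΓ1 : Tendsto Γ (𝓝[invertibleDiff ω₁] ω₁) (𝓝 (Γ ω₁)) :=
    ((hΓc ω₁ hω₁E).tendsto).mono_left nhdsWithin_le_nhds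
  have hπsub : Tendsto (fun ω => π ω - π ω₁) (𝓝[invertibleDiff ω₁] ω₁) (𝓝 0) := by
    have := hπ1.sub (tendsto_const_nhds (x := π ω₁))
    rwa [sub_self] at this
  -- Limit A : W tends to W ω₁
  have limA : Tendsto W (𝓝[invertibleDiff ω₁] ω₁) (𝓝 (W ω₁)) := by
    have hq : Tendsto
        (fun ω => (W ω - lam' * Φ ω - mu' * Γ ω) / (π ω - π ω₁) * (π ω - π ω₁)
          + (lam' * Φ ω + mu' * Γ ω))
        (𝓝[invertibleDiff ω₁] ω₁)
        (𝓝 (d1' * 0 + (lam' * Φ ω₁ + mu' * Γ ω₁))) :=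
      (hten'.mul hπsub).add (((hΦ1.const_mul _)).add ((hΓ1.const_mul _)))
    rw [mul_zero, zero_add, ← hrep'] at hq
    refine hq.congr' ?_ |>.mono_left le_rfl
    filter_upwards [hmemS] with ω hS
    have hne : π ω - π ω₁ ≠ 0 := sub_ne_zero.mpr ((hiff ω₁ ω).mp hS).1
    rw [div_mul_cancel₀ _ hne]
    ring
  -- Limit B : W tends to W ω₀
  have limB : Tendsto W (𝓝[invertibleDiff ω₁] ω₁) (𝓝 (W ω₀)) := by
    have hS0 : ∀ᶠ ω in 𝓝[invertibleDiff ω₁] ω₁, ω ∈ invertibleDiff ω₀ := by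
      filter_upwards [hmemS, hσ1.eventually_ne hσe] with ω hS hne
      exact (hiff ω₀ ω).mpr ⟨by rw [← hπeq]; exact ((hiff ω₁ ω).mp hS).1, hne⟩
    have hU' : ∀ᶠ ω in 𝓝[invertibleDiff ω₁] ω₁, ω ∈ U :=
      nhdsWithin_le_nhds (hUopen.mem_nhds hω₁U)
    have hbound : ∀ᶠ ω in 𝓝[invertibleDiff ω₁] ω₁,
        ‖W ω - lam * Φ ω - mu * Γ ω‖ ≤ (‖d1‖ + 1) * ‖π ω - π ω₀‖ := by
      filter_upwards [hU', hS0] with ω hU hS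
      have hd := hUprop ω hU hS
      have hπne : π ω - π ω₀ ≠ 0 := sub_ne_zero.mpr ((hiff ω₀ ω).mp hS).1
      have heq : W ω - lam * Φ ω - mu * Γ ω
          = (W ω - lam * Φ ω - mu * Γ ω) / (π ω - π ω₀) * (π ω - π ω₀) :=
        (div_mul_cancel₀ _ hπne).symm
      rw [heq, norm_mul]
      have hqb : ‖(W ω - lam * Φ ω - mu * Γ ω) / (π ω - π ω₀)‖ ≤ ‖d1‖ + 1 := by
        have := dist_eq_norm ((W ω - lam * Φ ω - mu * Γ ω) / (π ω - π ω₀)) d1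
        calc ‖(W ω - lam * Φ ω - mu * Γ ω) / (π ω - π ω₀)‖
            ≤ ‖d1‖ + dist ((W ω - lam * Φ ω - mu * Γ ω) / (π ω - π ω₀)) d1 := by
              rw [dist_eq_norm]
              calc ‖(W ω - lam * Φ ω - mu * Γ ω) / (π ω - π ω₀)‖
                  = ‖d1 + ((W ω - lam * Φ ω - mu * Γ ω) / (π ω - π ω₀) - d1)‖ := by ring_nf
                _ ≤ _ := norm_add_le _ _
          _ ≤ ‖d1‖ + 1 := by linarith [le_of_lt hd]
      exact mul_le_mul_of_nonneg_right hqb (norm_nonneg _)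
    have hπ0 : Tendsto (fun ω => (‖d1‖ + 1) * ‖π ω - π ω₀‖)
        (𝓝[invertibleDiff ω₁] ω₁) (𝓝 0) := by
      have : Tendsto (fun ω => π ω - π ω₀) (𝓝[invertibleDiff ω₁] ω₁) (𝓝 0) := by
        have := hπ1.sub (tendsto_const_nhds (x := π ω₀))
        rw [hπeq, sub_self] at this
        exact this
      simpa using (this.norm.const_mul (‖d1‖ + 1))
    have hzero : Tendsto (fun ω => W ω - lam * Φ ω - mu * Γ ω)
        (𝓝[invertibleDiff ω₁] ω₁) (𝓝 0) :=
      squeeze_zero_norm' hbound hπ0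
    have hq : Tendsto (fun ω => (W ω - lam * Φ ω - mu * Γ ω) + (lam * Φ ω + mu * Γ ω))
        (𝓝[invertibleDiff ω₁] ω₁) (𝓝 (0 + (lam * Φ ω₁ + mu * Γ ω₁))) :=
      hzero.add ((hΦ1.const_mul _).add (hΓ1.const_mul _))
    have hval : (0 : ℂ) + (lam * Φ ω₁ + mu * Γ ω₁) = W ω₀ := by
      rw [zero_add, hΦπ ω₁ ω₀ hπeq, hΓπ ω₁ ω₀ hπeq, ← hrep]
    rw [hval] at hq
    refine hq.congr (fun ω => by ring)
  exact tendsto_nhds_unique limA limB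

/-- A function that is locally constant (in the eventual sense) on an open preconnected set is
constant there. -/
lemma const_of_locally_const {D : Set ℂ} (hDo : IsOpen D) (hD : IsPreconnected D) (g : ℂ → ℂ)
    (h : ∀ b ∈ D, ∀ᶠ y in 𝓝 b, y ∈ D → g y = g b) :
    ∀ b ∈ D, ∀ b' ∈ D, g b = g b' := by
  intro b hb b' hb'
  have huo : IsOpen {y | y ∈ D ∧ g y = g b'} := by
    rw [isOpen_iff_mem_nhds]
    intro y hy
    filter_upwards [h y hy.1, hDo.mem_nhds hy.1] with z hz hzD
    exact ⟨hzD, by rw [hz hzD, hy.2]⟩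
  have hvo : IsOpen {y | y ∈ D ∧ g y ≠ g b'} := by
    rw [isOpen_iff_mem_nhds]
    intro y hy
    filter_upwards [h y hy.1, hDo.mem_nhds hy.1] with z hz hzD
    exact ⟨hzD, by rw [hz hzD]; exact hy.2⟩
  have hdisj : Disjoint {y | y ∈ D ∧ g y = g b'} {y | y ∈ D ∧ g y ≠ g b'} := by
    rw [Set.disjoint_left]
    rintro y ⟨-, h1⟩ ⟨-, h2⟩
    exact h2 h1
  have hsub : D ⊆ {y | y ∈ D ∧ g y = g b'} ∪ {y | y ∈ D ∧ g y ≠ g b'} := by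
    intro y hy
    by_cases hgy : g y = g b'
    · exact Or.inl ⟨hy, hgy⟩
    · exact Or.inr ⟨hy, hgy⟩
  have hne : (D ∩ {y | y ∈ D ∧ g y = g b'}).Nonempty := ⟨b', hb', hb', rfl⟩
  have := hD.subset_left_of_subset_union huo hvo hdisj hsub hne
  exact (this hb).2

end Bicomplex

open Bicomplex

/-- If `(F, G)` is an `i₂e`-generating pair on `D₀ = D₁ ×ₑ D₂` and `w` is
`(F,G)_j`-pseudoanalytic on `D₀`, then `w` decomposes as
`w(z₁ + z₂i₂) = w_{e1}(z₁ - z₂i₁)e₁ + w_{e2}(z₁ + z₂i₁)e₂` on `D₀`. -/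
theorem idempotent_decomposition_of_pseudoanalyticJ (D₁ D₂ : Set ℂ)
    (hD₁ : IsOpen D₁) (hD₂ : IsOpen D₂) (hcD₁ : IsConnected D₁) (hcD₂ : IsConnected D₂)
    (Fe1 Ge1 Fe2 Ge2 : ℂ → ℂ) (F G : Bicomplex → Bicomplex)
    (hFG : I2eGenPair Fe1 Ge1 Fe2 Ge2 D₁ D₂ F G)
    (w : Bicomplex → Bicomplex) (hw : PseudoanalyticJ F G w (eProd D₁ D₂)) :
    ∃ we1 we2 : ℂ → ℂ,
      ∀ ω ∈ eProd D₁ D₂,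
        w ω = ofComplex (we1 (P1 ω)) * e1 + ofComplex (we2 (P2 ω)) * e2 := by
  obtain ⟨⟨hFe1, hGe1, hne1⟩, ⟨hFe2, hGe2, hne2⟩, hFdec, hGdec⟩ := hFG
  have hPF1 : ∀ ω, P1 (F ω) = Fe1 (P1 ω) := fun ω => by rw [hFdec ω]; simp
  have hPF2 : ∀ ω, P2 (F ω) = Fe2 (P2 ω) := fun ω => by rw [hFdec ω]; simp
  have hPG1 : ∀ ω, P1 (G ω) = Ge1 (P1 ω) := fun ω => by rw [hGdec ω]; simp
  have hPG2 : ∀ ω, P2 (G ω) = Ge2 (P2 ω) := fun ω => by rw [hGdec ω]; simp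
  have hrepE : ∀ ω₀ ∈ eProd D₁ D₂,
      w ω₀ = ofHyp (lamJ F G w ω₀) * F ω₀ + ofHyp (muJ F G w ω₀) * G ω₀ := by
    intro ω₀ hω₀
    exact rep F G w ω₀ (by rw [hPF1, hPG1]; exact hne1 _ hω₀.1)
      (by rw [hPF2, hPG2]; exact hne2 _ hω₀.2)
  -- the `P1` instance of the core lemma
  have hE1 : ∀ ω₀ ∈ eProd D₁ D₂, ∃ lam mu : ℝ, ∃ d1 : ℂ,
      P1 (w ω₀) = lam * Fe1 (P1 ω₀) + mu * Ge1 (P1 ω₀) ∧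
      Tendsto (fun ω => (P1 (w ω) - lam * Fe1 (P1 ω) - mu * Ge1 (P1 ω)) / (P1 ω - P1 ω₀))
        (𝓝[invertibleDiff ω₀] ω₀) (𝓝 d1) := by
    intro ω₀ hω₀
    obtain ⟨d, hd⟩ := hw ω₀ hω₀
    refine ⟨(lamJ F G w ω₀).1 + (lamJ F G w ω₀).2,
      (muJ F G w ω₀).1 + (muJ F G w ω₀).2, P1 d, ?_, ?_⟩
    · have h := congrArg P1 (hrepE ω₀ hω₀)
      rw [P1_add, P1_mul, P1_mul, P1_ofHyp, P1_ofHyp, hPF1, hPG1] at h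
      exact h
    · have hc : Tendsto (fun ω => P1 ((w ω - ofHyp (lamJ F G w ω₀) * F ω
          - ofHyp (muJ F G w ω₀) * G ω) / (ω - ω₀)))
          (𝓝[invertibleDiff ω₀] ω₀) (𝓝 (P1 d)) := (continuous_P1.tendsto d).comp hd
      refine hc.congr' ?_
      filter_upwards [eventually_mem_nhdsWithin] with ω hS
      rw [P1_div _ _ hS, P1_sub, P1_sub, P1_mul, P1_mul, P1_ofHyp, P1_ofHyp, P1_sub,
        hPF1, hPG1]
  have hΦc1 : ∀ ω ∈ eProd D₁ D₂, ContinuousAt (fun ω => Fe1 (P1 ω)) ω := fun ω hω =>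
    ContinuousAt.comp (hFe1.continuousOn.continuousAt (hD₁.mem_nhds hω.1))
      continuous_P1.continuousAt
  have hΓc1 : ∀ ω ∈ eProd D₁ D₂, ContinuousAt (fun ω => Ge1 (P1 ω)) ω := fun ω hω =>
    ContinuousAt.comp (hGe1.continuousOn.continuousAt (hD₁.mem_nhds hω.1))
      continuous_P1.continuousAt
  have hcore1 := core P1 P2 (fun ω => Fe1 (P1 ω)) (fun ω => Ge1 (P1 ω))
    (fun ω => P1 (w ω)) (eProd D₁ D₂) continuous_P1 continuous_P2
    (fun _ _ => mem_invDiff) (fun _ _ h1 h2 => ext_P h1 h2)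
    (fun u v h => by simp only [h]) (fun u v h => by simp only [h]) hΦc1 hΓc1 hE1
  -- the `P2` instance of the core lemma
  have hE2 : ∀ ω₀ ∈ eProd D₁ D₂, ∃ lam mu : ℝ, ∃ d1 : ℂ,
      P2 (w ω₀) = lam * Fe2 (P2 ω₀) + mu * Ge2 (P2 ω₀) ∧
      Tendsto (fun ω => (P2 (w ω) - lam * Fe2 (P2 ω) - mu * Ge2 (P2 ω)) / (P2 ω - P2 ω₀))
        (𝓝[invertibleDiff ω₀] ω₀) (𝓝 d1) := by
    intro ω₀ hω₀
    obtain ⟨d, hd⟩ := hw ω₀ hω₀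
    refine ⟨(lamJ F G w ω₀).1 - (lamJ F G w ω₀).2,
      (muJ F G w ω₀).1 - (muJ F G w ω₀).2, P2 d, ?_, ?_⟩
    · have h := congrArg P2 (hrepE ω₀ hω₀)
      rw [P2_add, P2_mul, P2_mul, P2_ofHyp, P2_ofHyp, hPF2, hPG2] at h
      exact h
    · have hc : Tendsto (fun ω => P2 ((w ω - ofHyp (lamJ F G w ω₀) * F ω
          - ofHyp (muJ F G w ω₀) * G ω) / (ω - ω₀)))
          (𝓝[invertibleDiff ω₀] ω₀) (𝓝 (P2 d)) := (continuous_P2.tendsto d).comp hd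
      refine hc.congr' ?_
      filter_upwards [eventually_mem_nhdsWithin] with ω hS
      rw [P2_div _ _ hS, P2_sub, P2_sub, P2_mul, P2_mul, P2_ofHyp, P2_ofHyp, P2_sub,
        hPF2, hPG2]
  have hΦc2 : ∀ ω ∈ eProd D₁ D₂, ContinuousAt (fun ω => Fe2 (P2 ω)) ω := fun ω hω =>
    ContinuousAt.comp (hFe2.continuousOn.continuousAt (hD₂.mem_nhds hω.2))
      continuous_P2.continuousAt
  have hΓc2 : ∀ ω ∈ eProd D₁ D₂, ContinuousAt (fun ω => Ge2 (P2 ω)) ω := fun ω hω =>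
    ContinuousAt.comp (hGe2.continuousOn.continuousAt (hD₂.mem_nhds hω.2))
      continuous_P2.continuousAt
  have hcore2 := core P2 P1 (fun ω => Fe2 (P2 ω)) (fun ω => Ge2 (P2 ω))
    (fun ω => P2 (w ω)) (eProd D₁ D₂) continuous_P2 continuous_P1
    (fun ω₀ ω => ⟨fun h => ⟨(mem_invDiff.mp h).2, (mem_invDiff.mp h).1⟩,
      fun h => mem_invDiff.mpr ⟨h.2, h.1⟩⟩)
    (fun _ _ h1 h2 => ext_P h2 h1)
    (fun u v h => by simp only [h]) (fun u v h => by simp only [h]) hΦc2 hΓc2 hE2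
  -- constancy in the second coordinate
  have hC1 : ∀ a ∈ D₁, ∀ b ∈ D₂, ∀ b' ∈ D₂,
      P1 (w (idem a b)) = P1 (w (idem a b')) := by
    intro a ha
    have hloc : ∀ b ∈ D₂, ∀ᶠ y in 𝓝 b, y ∈ D₂ → P1 (w (idem a y)) = P1 (w (idem a b)) := by
      intro b hb
      have hmem : idem a b ∈ eProd D₁ D₂ := ⟨by simpa using ha, by simpa using hb⟩
      have h := hcore1 (idem a b) hmem
      filter_upwards [((continuous_idemR a).tendsto b).eventually h] with y hy hyD
      exact hy ⟨by simpa using ha, by simpa using hyD⟩ (by simp)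
    exact fun b hb b' hb' =>
      const_of_locally_const hD₂ hcD₂.isPreconnected _ hloc b hb b' hb'
  -- constancy in the first coordinate
  have hC2 : ∀ b ∈ D₂, ∀ a ∈ D₁, ∀ a' ∈ D₁,
      P2 (w (idem a b)) = P2 (w (idem a' b)) := by
    intro b hb
    have hloc : ∀ a ∈ D₁, ∀ᶠ x in 𝓝 a, x ∈ D₁ → P2 (w (idem x b)) = P2 (w (idem a b)) := by
      intro a ha
      have hmem : idem a b ∈ eProd D₁ D₂ := ⟨by simpa using ha, by simpa using hb⟩
      have h := hcore2 (idem a b) hmem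
      filter_upwards [((continuous_idemL b).tendsto a).eventually h] with x hx hxD
      exact hx ⟨by simpa using hxD, by simpa using hb⟩ (by simp)
    exact fun a ha a' ha' =>
      const_of_locally_const hD₁ hcD₁.isPreconnected _ hloc a ha a' ha'
  obtain ⟨a₀, ha₀⟩ := hcD₁.nonempty
  obtain ⟨b₀, hb₀⟩ := hcD₂.nonempty
  refine ⟨fun ζ => P1 (w (idem ζ b₀)), fun ζ => P2 (w (idem a₀ ζ)), fun ω hω => ?_⟩
  have h1 : P1 (w ω) = P1 (w (idem (P1 ω) b₀)) := by
    conv_lhs => rw [← idem_P ω]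
    exact hC1 (P1 ω) hω.1 (P2 ω) hω.2 b₀ hb₀
  have h2 : P2 (w ω) = P2 (w (idem a₀ (P2 ω))) := by
    conv_lhs => rw [← idem_P ω]
    exact hC2 (P2 ω) hω.2 (P1 ω) hω.1 a₀ ha₀
  calc w ω = ofComplex (P1 (w ω)) * e1 + ofComplex (P2 (w ω)) * e2 := eq_ofComplex_P _
    _ = _ := by rw [h1, h2]
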